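/- For every δ ∈ (0,1) there exists a constant C = C(δ) > 0 such that for every natural number n and every (u1,u2) ∈ Γ with u1 > 0 and u2 > 0: | (1/A_n^δ) · Σ_{k=0}^{n} A_{n−k}^{δ−1} · H*_{k,1}(u1,u2) | ≤ C · (1/u1²) · ( 1/((n+1)^δ · u2^δ) + 1/((n+1) · u2) ). -/

import Mathlib

open MeasureTheory Finset

/-- The triangle `Γ = {(u₁,u₂) : 0 ≤ u₂ ≤ u₁/3, 0 ≤ u₁ ≤ 1}`. -/
def GammaT : Set (ℝ × ℝ) := {u | 0 ≤ u.2 ∧ u.2 ≤ u.1 / 3 ∧ 0 ≤ u.1 ∧ u.1 ≤ 1}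

open Finset in
/-- Cesàro numbers: `A_n^δ = (δ+1)(δ+2)⋯(δ+n)/n!`, with `A_0^δ = 1`. -/
noncomputable def cesaroA (δ : ℝ) (n : ℕ) : ℝ :=
  (∏ i ∈ Finset.range n, (δ + i + 1)) / n.factorial

/-- The function `H*_{k,1}`. -/
noncomputable def Hstar1 (k : ℕ) (u : ℝ × ℝ) : ℝ :=
  (1 / 2) * Real.cos ((2 * (k : ℝ) + 1) * Real.pi * u.2) /
    (Real.sin (Real.pi * (u.1 + u.2) / 2) * Real.sin (Real.pi * (u.1 - u.2) / 2))

lemma cesaro_succ (δ : ℝ) (n : ℕ) :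
    cesaroA δ (n+1) = cesaroA δ n * ((δ + n + 1)/(n+1)) := by
  unfold cesaroA
  rw [Finset.prod_range_succ, Nat.factorial_succ]
  push_cast
  rw [div_mul_div_comm]
  congr 1
  · ring

lemma cesaro_pos {δ : ℝ} (h : -1 < δ) (n : ℕ) : 0 < cesaroA δ n := by
  unfold cesaroA
  apply div_pos
  · apply Finset.prod_pos
    intro i _
    have : (0:ℝ) ≤ i := Nat.cast_nonneg i
    linarith
  · exact_mod_cast Nat.factorial_pos n

lemma cesaro_shift (δ : ℝ) (n : ℕ) :
    cesaroA (δ-1) (n+1) = cesaroA δ n * (δ/(n+1)) := by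
  unfold cesaroA
  rw [Finset.prod_range_succ', Nat.factorial_succ]
  push_cast
  have h1 : ((n:ℝ)+1) ≠ 0 := by positivity
  have h2 : ((n.factorial:ℝ)) ≠ 0 := by exact_mod_cast Nat.factorial_ne_zero n
  have : ∀ i ∈ Finset.range n, (δ - 1 + ((i:ℝ)+1) + 1) = (δ + i + 1) := by
    intro i _; push_cast; ring
  rw [Finset.prod_congr rfl this]
  rw [div_mul_div_comm]
  rw [show δ - 1 + 0 + 1 = δ by ring]
  rw [mul_comm ((n:ℝ)+1) (n.factorial:ℝ)]

lemma cesaro_sum (δ : ℝ) (n : ℕ) :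
    ∑ k ∈ Finset.range (n+1), cesaroA (δ-1) k = cesaroA δ n := by
  induction n with
  | zero => simp [cesaroA]
  | succ n ih =>
    rw [Finset.sum_range_succ, ih, cesaro_shift, cesaro_succ]
    have : ((n:ℝ)+1) ≠ 0 := by positivity
    field_simp
    ring

lemma cesaro_lb {δ : ℝ} (h0 : 0 ≤ δ) (h1 : δ ≤ 1) (n : ℕ) :
    ((n:ℝ)+1) ^ δ ≤ cesaroA δ n := by
  induction n with
  | zero => simp [cesaroA]
  | succ n ih =>
    rw [cesaro_succ]
    push_cast
    have hn1 : (0:ℝ) < (n:ℝ) + 1 := by positivity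
    have hy0 : (0:ℝ) < 1/((n:ℝ)+1) := by positivity
    have key : ((n:ℝ)+1+1) ^ δ ≤ ((n:ℝ)+1) ^ δ * ((δ + n + 1)/(n+1)) := by
      have hb : ((n:ℝ)+1+1) = ((n:ℝ)+1) * (1 + 1/((n:ℝ)+1)) := by field_simp
      rw [hb, Real.mul_rpow (by positivity) (by positivity)]
      have hber : (1 + 1/((n:ℝ)+1)) ^ δ ≤ 1 + δ * (1/((n:ℝ)+1)) :=
        rpow_one_add_le_one_add_mul_self (by linarith) h0 h1
      have h2 : 1 + δ * (1/((n:ℝ)+1)) = (δ + n + 1)/(n+1) := by field_simp; ring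
      have := mul_le_mul_of_nonneg_left hber (le_of_lt (Real.rpow_pos_of_pos hn1 δ))
      rw [h2] at this
      exact this
    refine key.trans ?_
    apply mul_le_mul_of_nonneg_right ih
    apply div_nonneg (by linarith) (by linarith)

lemma cesaro_ub {δ : ℝ} (h0 : 0 < δ) (h1 : δ ≤ 1) (m : ℕ) :
    cesaroA (δ-1) m ≤ ((m:ℝ)+1) ^ (δ-1) := by
  induction m with
  | zero => simp [cesaroA]
  | succ m ih =>
    rw [cesaro_succ]
    push_cast
    have hm1 : (0:ℝ) < (m:ℝ) + 1 := by positivity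
    set y : ℝ := 1/((m:ℝ)+1) with hy
    have hy0 : 0 < y := by positivity
    have hy1 : y ≤ 1 := by rw [hy, div_le_one hm1]; linarith
    have hpos : (0:ℝ) < 1 + y := by linarith
    have hfac : (0:ℝ) ≤ (δ - 1 + m + 1)/((m:ℝ)+1) := by
      apply div_nonneg (by linarith) (by linarith)
    have step1 : cesaroA (δ-1) m * ((δ - 1 + m + 1)/(m+1)) ≤
        ((m:ℝ)+1) ^ (δ-1) * ((δ - 1 + m + 1)/(m+1)) :=
      mul_le_mul_of_nonneg_right ih hfac
    refine step1.trans ?_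
    have e1 : (1 + y) ^ (δ-1) = ((1 + y) ^ (1-δ))⁻¹ := by
      rw [show δ-1 = -(1-δ) by ring, Real.rpow_neg hpos.le]
    have hber : (1 + y) ^ (1-δ) ≤ 1 + (1-δ) * y :=
      rpow_one_add_le_one_add_mul_self (by linarith) (by linarith) (by linarith)
    have hpos2 : (0:ℝ) < 1 + (1-δ)*y := by nlinarith
    have hrpos : (0:ℝ) < (1+y) ^ (1-δ) := Real.rpow_pos_of_pos hpos _
    have i1 : (1+(1-δ)*y)⁻¹ ≤ ((1+y)^(1-δ))⁻¹ := by
      apply inv_anti₀ hrpos hber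
    have i2 : 1-(1-δ)*y ≤ (1+(1-δ)*y)⁻¹ := by
      rw [inv_eq_one_div, le_div_iff₀ hpos2]; nlinarith [sq_nonneg ((1-δ)*y)]
    have key : (δ - 1 + m + 1)/((m:ℝ)+1) ≤ (1 + y) ^ (δ-1) := by
      have h4 : (δ - 1 + m + 1)/((m:ℝ)+1) = 1 - (1-δ)*y := by
        rw [hy]; field_simp; ring
      rw [h4, e1]
      exact i2.trans i1
    have step2 : ((m:ℝ)+1) ^ (δ-1) * ((δ - 1 + m + 1)/(m+1)) ≤
        ((m:ℝ)+1) ^ (δ-1) * (1 + y) ^ (δ-1) :=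
      mul_le_mul_of_nonneg_left key (le_of_lt (Real.rpow_pos_of_pos hm1 _))
    refine step2.trans ?_
    rw [← Real.mul_rpow hm1.le hpos.le]
    have hb : ((m:ℝ)+1) * (1 + y) = (m:ℝ)+1+1 := by rw [hy]; field_simp
    rw [hb]

lemma cesaro_anti {δ : ℝ} (h0 : 0 < δ) (h1 : δ ≤ 1) (m : ℕ) :
    cesaroA (δ-1) (m+1) ≤ cesaroA (δ-1) m := by
  rw [cesaro_succ]
  have hp := cesaro_pos (by linarith : (-1:ℝ) < δ-1) m
  have hm1 : (0:ℝ) < (m:ℝ) + 1 := by positivity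
  have : (δ - 1 + m + 1)/((m:ℝ)+1) ≤ 1 := by
    rw [div_le_one hm1]; linarith
  nlinarith

lemma pow_sum_bound {δ : ℝ} (h0 : 0 < δ) (h1 : δ ≤ 1) (N : ℕ) :
    ∑ m ∈ Finset.range (N+1), ((m:ℝ)+1) ^ (δ-1) ≤ ((N:ℝ)+1) ^ δ / δ := by
  have key : ∀ m : ℕ, δ * ((m:ℝ)+1) ^ (δ-1) ≤ ((m+1:ℕ):ℝ) ^ δ - ((m:ℕ):ℝ) ^ δ := by
    intro m
    have hm1 : (0:ℝ) < (m:ℝ) + 1 := by positivity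
    push_cast
    -- m^δ = (m+1)^δ * (m/(m+1))^δ ≤ (m+1)^δ * (1 - δ/(m+1))
    have hmc : (0:ℝ) ≤ (m:ℝ) := Nat.cast_nonneg m
    have hd1 : 1/((m:ℝ)+1) ≤ 1 := by rw [div_le_one hm1]; linarith
    have hnn : (0:ℝ) ≤ 1 + (-(1/((m:ℝ)+1))) := by linarith
    have hb : ((m:ℝ)) = ((m:ℝ)+1) * (1 + (-(1/((m:ℝ)+1)))) := by field_simp; ring
    have hber : (1 + (-(1/((m:ℝ)+1)))) ^ δ ≤ 1 + δ * (-(1/((m:ℝ)+1))) := by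
      apply rpow_one_add_le_one_add_mul_self _ h0.le h1
      have : 1/((m:ℝ)+1) ≤ 1 := by rw [div_le_one hm1]; linarith
      linarith
    have hmul : ((m:ℝ)) ^ δ ≤ ((m:ℝ)+1) ^ δ * (1 + δ * (-(1/((m:ℝ)+1)))) := by
      calc ((m:ℝ)) ^ δ = ((m:ℝ)+1) ^ δ * (1 + (-(1/((m:ℝ)+1)))) ^ δ := by
            rw [← Real.mul_rpow (by positivity) hnn, ← hb]
      _ ≤ ((m:ℝ)+1) ^ δ * (1 + δ * (-(1/((m:ℝ)+1)))) :=
            mul_le_mul_of_nonneg_left hber (le_of_lt (Real.rpow_pos_of_pos hm1 _))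
    have e2 : ((m:ℝ)+1) ^ δ * (δ * (1/((m:ℝ)+1))) = δ * ((m:ℝ)+1) ^ (δ-1) := by
      rw [show δ - 1 = δ + (-1) by ring, Real.rpow_add hm1, Real.rpow_neg_one]
      field_simp
    nlinarith [hmul, e2]
  have tele : ∑ m ∈ Finset.range (N+1), (((m+1:ℕ):ℝ) ^ δ - ((m:ℕ):ℝ) ^ δ) = ((N:ℝ)+1) ^ δ - ((0:ℕ):ℝ) ^ δ := by
    rw [Finset.sum_range_sub (fun m => ((m:ℕ):ℝ) ^ δ)]
    push_cast
    ring_nf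
  have hz : ((0:ℕ):ℝ) ^ δ = 0 := by
    simp [Real.zero_rpow h0.ne']
  have hsum : δ * ∑ m ∈ Finset.range (N+1), ((m:ℝ)+1) ^ (δ-1) ≤ ((N:ℝ)+1) ^ δ := by
    rw [Finset.mul_sum]
    calc ∑ m ∈ Finset.range (N+1), δ * ((m:ℝ)+1) ^ (δ-1)
        ≤ ∑ m ∈ Finset.range (N+1), (((m+1:ℕ):ℝ) ^ δ - ((m:ℕ):ℝ) ^ δ) :=
          Finset.sum_le_sum (fun m _ => key m)
      _ = ((N:ℝ)+1) ^ δ - ((0:ℕ):ℝ) ^ δ := tele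
      _ ≤ ((N:ℝ)+1) ^ δ := by rw [hz]; ring_nf; exact le_refl _
  rw [le_div_iff₀ h0]
  linarith [hsum]

lemma trig_sum (α β : ℝ) (h : Real.sin (β/2) ≠ 0) (j : ℕ) :
    |∑ m ∈ Finset.range j, Real.cos (α + m * β)| ≤ 1/|Real.sin (β/2)| := by
  have key : ∀ m : ℕ, 2 * Real.sin (β/2) * Real.cos (α + m * β)
      = Real.sin (α + m*β + β/2) - Real.sin (α + m*β - β/2) := by
    intro m
    rw [Real.sin_add, Real.sin_sub]
    ring
  have tele : ∑ m ∈ Finset.range j, (2 * Real.sin (β/2) * Real.cos (α + m * β))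
      = Real.sin (α + j*β - β/2) - Real.sin (α + 0*β - β/2) := by
    have : ∀ m : ℕ, 2 * Real.sin (β/2) * Real.cos (α + m * β)
        = Real.sin (α + ((m+1:ℕ):ℝ)*β - β/2) - Real.sin (α + (m:ℝ)*β - β/2) := by
      intro m
      rw [key m]
      push_cast
      ring_nf
    rw [Finset.sum_congr rfl (fun m _ => this m),
      Finset.sum_range_sub (fun m : ℕ => Real.sin (α + (m:ℝ)*β - β/2))]
    norm_num
  have habs : |∑ m ∈ Finset.range j, (2 * Real.sin (β/2) * Real.cos (α + m * β))| ≤ 2 := by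
    rw [tele]
    have := Real.neg_one_le_sin (α + j*β - β/2)
    have := Real.sin_le_one (α + j*β - β/2)
    have := Real.neg_one_le_sin (α + 0*β - β/2)
    have := Real.sin_le_one (α + 0*β - β/2)
    rw [abs_le]; constructor <;> linarith
  rw [← Finset.mul_sum] at habs
  rw [abs_mul] at habs
  have h2 : |2 * Real.sin (β/2)| = 2 * |Real.sin (β/2)| := by
    rw [abs_mul]; norm_num
  rw [h2] at habs
  have hpos : 0 < |Real.sin (β/2)| := abs_pos.mpr h
  rw [le_div_iff₀ hpos]
  nlinarith [abs_nonneg (∑ m ∈ Finset.range j, Real.cos (α + m * β))]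

lemma abel_bound (f g : ℕ → ℝ) (M : ℝ)
    (hf : ∀ i, f (i+1) ≤ f i) (hf0 : ∀ i, 0 ≤ f i)
    (hg : ∀ j, |∑ m ∈ Finset.range j, g m| ≤ M) (L : ℕ) :
    |∑ m ∈ Finset.range L, f m * g m| ≤ f 0 * M := by
  have hM : 0 ≤ M := le_trans (abs_nonneg _) (hg 0)
  cases L with
  | zero => simpa using mul_nonneg (hf0 0) hM
  | succ n =>
    have hfanti : Antitone f := antitone_nat_of_succ_le hf
    have hparts := Finset.sum_range_by_parts f g (n+1)
    simp only [smul_eq_mul, Nat.add_sub_cancel] at hparts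
    rw [hparts]
    have tele : ∑ i ∈ Finset.range n, (f i - f (i+1)) = f 0 - f n := by
      rw [Finset.sum_range_sub' f]
    have hbd : |∑ i ∈ Finset.range n, (f (i+1) - f i) * ∑ j ∈ Finset.range (i+1), g j|
        ≤ (f 0 - f n) * M := by
      calc |∑ i ∈ Finset.range n, (f (i+1) - f i) * ∑ j ∈ Finset.range (i+1), g j|
          ≤ ∑ i ∈ Finset.range n, |(f (i+1) - f i) * ∑ j ∈ Finset.range (i+1), g j| :=
            Finset.abs_sum_le_sum_abs _ _
        _ ≤ ∑ i ∈ Finset.range n, (f i - f (i+1)) * M := by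
            apply Finset.sum_le_sum
            intro i _
            rw [abs_mul]
            have h1 : |f (i+1) - f i| = f i - f (i+1) := by
              rw [abs_sub_comm, abs_of_nonneg (by linarith [hf i])]
            rw [h1]
            apply mul_le_mul_of_nonneg_left (hg (i+1)) (by linarith [hf i])
        _ = (f 0 - f n) * M := by rw [← Finset.sum_mul, tele]
    have hbd2 : |f n * ∑ i ∈ Finset.range (n+1), g i| ≤ f n * M := by
      rw [abs_mul, abs_of_nonneg (hf0 n)]
      apply mul_le_mul_of_nonneg_left (hg (n+1)) (hf0 n)
    calc |f n * ∑ i ∈ Finset.range (n+1), g i -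
          ∑ i ∈ Finset.range n, (f (i+1) - f i) * ∑ j ∈ Finset.range (i+1), g j|
        ≤ |f n * ∑ i ∈ Finset.range (n+1), g i| +
          |∑ i ∈ Finset.range n, (f (i+1) - f i) * ∑ j ∈ Finset.range (i+1), g j| :=
          abs_sub _ _
      _ ≤ f n * M + (f 0 - f n) * M := add_le_add hbd2 hbd
      _ = f 0 * M := by ring

lemma sin_lb {t : ℝ} (h0 : 0 ≤ t) (h1 : t ≤ 2*Real.pi/3) : t/4 ≤ Real.sin t := by
  have hpi3 : (3:ℝ) < Real.pi := Real.pi_gt_three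
  have hpi4 : Real.pi < 4 := by linarith [Real.pi_lt_d2]
  rcases le_or_gt t (Real.pi/2) with hc | hc
  · have hs := Real.mul_le_sin h0 hc
    have hpip : (0:ℝ) < Real.pi := by linarith
    have h5 : t/4 ≤ 2/Real.pi * t := by
      rw [div_mul_eq_mul_div, div_le_div_iff₀ (by norm_num) hpip]
      nlinarith
    linarith
  · have h2 : Real.sin t = Real.sin (Real.pi - t) := (Real.sin_pi_sub t).symm
    rw [h2]
    have hb1 : 0 ≤ Real.pi - t := by linarith
    have hb2 : Real.pi - t ≤ Real.pi/2 := by linarith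
    have hs := Real.mul_le_sin hb1 hb2
    have hlb : Real.pi/3 ≤ Real.pi - t := by linarith
    have hpip : (0:ℝ) < Real.pi := by linarith
    have h6 : (2:ℝ)/Real.pi * (Real.pi/3) = 2/3 := by field_simp
    have h7 : (2:ℝ)/3 ≤ 2/Real.pi * (Real.pi - t) := by
      rw [← h6]
      apply mul_le_mul_of_nonneg_left hlb (by positivity)
    have h8 : t/4 ≤ 2/3 := by linarith
    linarith

set_option maxHeartbeats 1000000 in
lemma key_estimate {δ : ℝ} (hδ0 : 0 < δ) (hδ1 : δ < 1) (n : ℕ) {v : ℝ}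
    (hv0 : 0 < v) (hv1 : v ≤ 1/3) :
    |∑ k ∈ Finset.range (n+1), cesaroA (δ-1) (n-k) * Real.cos ((2*(k:ℝ)+1) * Real.pi * v)|
      ≤ (3/δ) * (cesaroA δ n / (((n:ℝ)+1) ^ δ * v ^ δ)) := by
  have hπ : (0:ℝ) < Real.pi := Real.pi_pos
  have hπ3 : (3:ℝ) < Real.pi := Real.pi_gt_three
  have hδ1' : -1 < δ - 1 := by linarith
  have hδ' : (-1:ℝ) < δ := by linarith
  have hApos : 0 < cesaroA δ n := cesaro_pos hδ' n
  have hAlb : ((n:ℝ)+1) ^ δ ≤ cesaroA δ n := cesaro_lb hδ0.le hδ1.le n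
  have hx0 : (0:ℝ) < ((n:ℝ)+1) ^ δ * v ^ δ :=
    mul_pos (Real.rpow_pos_of_pos (by positivity) _) (Real.rpow_pos_of_pos hv0 _)
  have hvδ : (0:ℝ) < v ^ δ := Real.rpow_pos_of_pos hv0 _
  by_cases hcase : ((n:ℝ)+1) * v ≤ 1
  · -- easy case
    have hreflA : ∑ k ∈ Finset.range (n+1), cesaroA (δ-1) (n-k) = cesaroA δ n := by
      have h0 := Finset.sum_range_reflect (fun m => cesaroA (δ-1) m) (n+1)
      simp only [Nat.add_sub_cancel] at h0
      rw [h0, cesaro_sum]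
    have hb : |∑ k ∈ Finset.range (n+1),
        cesaroA (δ-1) (n-k) * Real.cos ((2*(k:ℝ)+1) * Real.pi * v)| ≤ cesaroA δ n := by
      calc |∑ k ∈ Finset.range (n+1),
            cesaroA (δ-1) (n-k) * Real.cos ((2*(k:ℝ)+1) * Real.pi * v)|
          ≤ ∑ k ∈ Finset.range (n+1),
            |cesaroA (δ-1) (n-k) * Real.cos ((2*(k:ℝ)+1) * Real.pi * v)| :=
            Finset.abs_sum_le_sum_abs _ _
        _ ≤ ∑ k ∈ Finset.range (n+1), cesaroA (δ-1) (n-k) := by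
            apply Finset.sum_le_sum
            intro k _
            rw [abs_mul, abs_of_pos (cesaro_pos hδ1' _)]
            have h1 := Real.abs_cos_le_one ((2*(k:ℝ)+1) * Real.pi * v)
            nlinarith [cesaro_pos hδ1' (n-k),
              abs_nonneg (Real.cos ((2*(k:ℝ)+1) * Real.pi * v))]
        _ = cesaroA δ n := hreflA
    have hxle1 : ((n:ℝ)+1) ^ δ * v ^ δ ≤ 1 := by
      rw [← Real.mul_rpow (by positivity) hv0.le]
      exact Real.rpow_le_one (by positivity) hcase hδ0.le
    have h1 : cesaroA δ n ≤ cesaroA δ n / (((n:ℝ)+1) ^ δ * v ^ δ) := by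
      rw [le_div_iff₀ hx0]
      nlinarith
    have h3δ : (1:ℝ) ≤ 3/δ := by
      rw [le_div_iff₀ hδ0]; linarith
    nlinarith [div_pos hApos hx0]
  · -- main case
    push_neg at hcase
    have hinv : 1/v < (n:ℝ)+1 := by
      rw [div_lt_iff₀ hv0]; linarith
    set N := ⌊1/v⌋₊ with hNdef
    have hN1 : (N:ℝ) ≤ 1/v := Nat.floor_le (by positivity)
    have hN2 : 1/v < (N:ℝ)+1 := Nat.lt_floor_add_one (1/v)
    have hNn : N ≤ n := by
      have h' : (N:ℝ) < (n:ℝ)+1 := lt_of_le_of_lt hN1 hinv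
      have h'' : N < n+1 := by exact_mod_cast h'
      omega
    set β : ℝ := -(2 * Real.pi * v) with hβ
    set α : ℝ := (2*(n:ℝ)+1) * Real.pi * v with hα
    set g : ℕ → ℝ := fun m => Real.cos (α + m * β) with hg
    have hrefl : ∑ k ∈ Finset.range (n+1),
        cesaroA (δ-1) (n-k) * Real.cos ((2*(k:ℝ)+1) * Real.pi * v)
        = ∑ m ∈ Finset.range (n+1), cesaroA (δ-1) m * g m := by
      have h0 := Finset.sum_range_reflect (fun m => cesaroA (δ-1) m * g m) (n+1)
      simp only [Nat.add_sub_cancel] at h0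
      rw [← h0]
      apply Finset.sum_congr rfl
      intro k hk
      have hk' : k ≤ n := by
        have := Finset.mem_range.mp hk; omega
      congr 1
      rw [hg]
      congr 1
      have hcast : ((n - k : ℕ):ℝ) = (n:ℝ) - k := by
        rw [Nat.cast_sub hk']
      rw [hcast, hα, hβ]
      ring
    have hsplit : ∑ m ∈ Finset.range (N+1), cesaroA (δ-1) m * g m
        + ∑ m ∈ Finset.Ico (N+1) (n+1), cesaroA (δ-1) m * g m
        = ∑ m ∈ Finset.range (n+1), cesaroA (δ-1) m * g m :=
      Finset.sum_range_add_sum_Ico _ (by omega)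
    have hvinv : (1:ℝ) ≤ 1/v := by
      rw [le_div_iff₀ hv0]; linarith
    have hhead : |∑ m ∈ Finset.range (N+1), cesaroA (δ-1) m * g m|
        ≤ (2/δ) * (1/v ^ δ) := by
      have c1 : |∑ m ∈ Finset.range (N+1), cesaroA (δ-1) m * g m|
          ≤ ∑ m ∈ Finset.range (N+1), ((m:ℝ)+1) ^ (δ-1) := by
        calc |∑ m ∈ Finset.range (N+1), cesaroA (δ-1) m * g m|
            ≤ ∑ m ∈ Finset.range (N+1), |cesaroA (δ-1) m * g m| :=
              Finset.abs_sum_le_sum_abs _ _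
          _ ≤ ∑ m ∈ Finset.range (N+1), ((m:ℝ)+1) ^ (δ-1) := by
              apply Finset.sum_le_sum
              intro m _
              rw [abs_mul, abs_of_pos (cesaro_pos hδ1' _)]
              have h1 : |g m| ≤ 1 := Real.abs_cos_le_one _
              have h2 := cesaro_ub hδ0 hδ1.le m
              nlinarith [cesaro_pos hδ1' m, abs_nonneg (g m)]
      have c2 := pow_sum_bound hδ0 hδ1.le N
      have c3 : ((N:ℝ)+1) ^ δ ≤ 2 * (1/v ^ δ) := by
        have hb1 : ((N:ℝ)+1) ≤ 2/v := by
          have e : (2:ℝ)/v = 1/v + 1/v := by ring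
          linarith
        have hb2 : ((N:ℝ)+1) ^ δ ≤ (2/v) ^ δ :=
          Real.rpow_le_rpow (by positivity) hb1 hδ0.le
        have hb3 : ((2:ℝ)/v) ^ δ = 2 ^ δ * (v ^ δ)⁻¹ := by
          rw [Real.div_rpow (by norm_num) hv0.le, div_eq_mul_inv]
        have hb4 : (2:ℝ) ^ δ ≤ 2 := by
          calc (2:ℝ) ^ δ ≤ (2:ℝ) ^ (1:ℝ) :=
              Real.rpow_le_rpow_of_exponent_le one_le_two hδ1.le
            _ = 2 := Real.rpow_one 2
        have hb5 : (2:ℝ) ^ δ * (v ^ δ)⁻¹ ≤ 2 * (v ^ δ)⁻¹ :=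
          mul_le_mul_of_nonneg_right hb4 (by positivity)
        rw [hb3] at hb2
        rw [one_div]
        linarith
      calc |∑ m ∈ Finset.range (N+1), cesaroA (δ-1) m * g m|
          ≤ ∑ m ∈ Finset.range (N+1), ((m:ℝ)+1) ^ (δ-1) := c1
        _ ≤ ((N:ℝ)+1) ^ δ / δ := c2
        _ ≤ (2 * (1/v ^ δ)) / δ := by gcongr
        _ = (2/δ) * (1/v ^ δ) := by ring
    have hsin : 2*v ≤ Real.sin (Real.pi * v) := by
      have h1 : Real.pi * v ≤ Real.pi/2 := by nlinarith
      have h2 := Real.mul_le_sin (show (0:ℝ) ≤ Real.pi * v by positivity) h1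
      have e : 2/Real.pi * (Real.pi * v) = 2*v := by
        field_simp
      rw [e] at h2
      exact h2
    have hsinβ : |Real.sin (β/2)| = Real.sin (Real.pi * v) := by
      have e : β/2 = -(Real.pi * v) := by rw [hβ]; ring
      rw [e, Real.sin_neg, abs_neg, abs_of_nonneg (by linarith)]
    have hβne : Real.sin (β/2) ≠ 0 := by
      intro h
      rw [h, abs_zero] at hsinβ
      linarith
    have htailg : ∀ j, |∑ m ∈ Finset.range j, g (N+1+m)| ≤ 1/(2*v) := by
      intro j
      have e : ∀ m : ℕ, g (N+1+m) = Real.cos ((α + ((N:ℝ)+1)*β) + m * β) := by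
        intro m
        rw [hg]
        simp only
        congr 1
        push_cast
        ring
      rw [Finset.sum_congr rfl (fun m _ => e m)]
      refine (trig_sum (α + ((N:ℝ)+1)*β) β hβne j).trans ?_
      rw [hsinβ]
      apply one_div_le_one_div_of_le (by linarith) (by linarith)
    have htail : |∑ m ∈ Finset.Ico (N+1) (n+1), cesaroA (δ-1) m * g m|
        ≤ (1/2) * (1/v ^ δ) := by
      rw [Finset.sum_Ico_eq_sum_range]
      have hab := abel_bound (fun i => cesaroA (δ-1) (N+1+i)) (fun i => g (N+1+i)) (1/(2*v))
        (fun i => by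
          show cesaroA (δ-1) (N+1+(i+1)) ≤ cesaroA (δ-1) (N+1+i)
          rw [show N+1+(i+1) = N+1+i+1 from by omega]
          exact cesaro_anti hδ0 hδ1.le (N+1+i))
        (fun i => (cesaro_pos hδ1' _).le)
        htailg ((n+1)-(N+1))
      refine hab.trans ?_
      have u1b : cesaroA (δ-1) (N+1+0) ≤ ((N:ℝ)+1+1) ^ (δ-1) := by
        have h := cesaro_ub hδ0 hδ1.le (N+1)
        have e : ((N+1 : ℕ):ℝ) + 1 = (N:ℝ)+1+1 := by push_cast; ring
        rw [e] at h
        simpa using h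
      have u2b : ((N:ℝ)+1+1) ^ (δ-1) ≤ (1/v) ^ (δ-1) :=
        Real.rpow_le_rpow_of_nonpos (by positivity) (by linarith) (by linarith)
      have u3 : ((1:ℝ)/v) ^ (δ-1) = v * (v ^ δ)⁻¹ := by
        rw [one_div, Real.inv_rpow hv0.le, Real.rpow_sub hv0, Real.rpow_one, inv_div,
          div_eq_mul_inv]
      have hc : cesaroA (δ-1) (N+1+0) * (1/(2*v)) ≤ (v * (v ^ δ)⁻¹) * (1/(2*v)) := by
        apply mul_le_mul_of_nonneg_right _ (by positivity)
        calc cesaroA (δ-1) (N+1+0) ≤ ((N:ℝ)+1+1) ^ (δ-1) := u1b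
          _ ≤ (1/v) ^ (δ-1) := u2b
          _ = v * (v ^ δ)⁻¹ := u3
      refine hc.trans (le_of_eq ?_)
      field_simp
    have hfin : 1/v ^ δ ≤ cesaroA δ n / (((n:ℝ)+1) ^ δ * v ^ δ) := by
      rw [div_le_div_iff₀ hvδ hx0]
      nlinarith [Real.rpow_pos_of_pos (show (0:ℝ) < (n:ℝ)+1 by positivity) δ,
        mul_le_mul_of_nonneg_right hAlb hvδ.le]
    have hS2 : |∑ k ∈ Finset.range (n+1),
        cesaroA (δ-1) (n-k) * Real.cos ((2*(k:ℝ)+1) * Real.pi * v)|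
        ≤ (2/δ) * (1/v ^ δ) + (1/2) * (1/v ^ δ) := by
      rw [hrefl, ← hsplit]
      exact (abs_add_le _ _).trans (add_le_add hhead htail)
    have hd2 : (2:ℝ)/δ + 1/2 ≤ 3/δ := by
      rw [div_add_div _ _ (ne_of_gt hδ0) (by norm_num : (2:ℝ) ≠ 0),
        div_le_div_iff₀ (by positivity) hδ0]
      nlinarith
    calc |∑ k ∈ Finset.range (n+1),
        cesaroA (δ-1) (n-k) * Real.cos ((2*(k:ℝ)+1) * Real.pi * v)|
        ≤ (2/δ) * (1/v ^ δ) + (1/2) * (1/v ^ δ) := hS2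
      _ = (2/δ + 1/2) * (1/v ^ δ) := by ring
      _ ≤ (3/δ) * (1/v ^ δ) := mul_le_mul_of_nonneg_right hd2 (by positivity)
      _ ≤ (3/δ) * (cesaroA δ n / (((n:ℝ)+1) ^ δ * v ^ δ)) :=
          mul_le_mul_of_nonneg_left hfin (by positivity)

set_option maxHeartbeats 1000000 in
theorem stmt_10 :
    ∀ δ : ℝ, 0 < δ → δ < 1 → ∃ C : ℝ, 0 < C ∧
      ∀ n : ℕ, ∀ u : ℝ × ℝ, u ∈ GammaT → 0 < u.1 → 0 < u.2 →
        |(1 / cesaroA δ n) *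
            ∑ k ∈ Finset.range (n + 1), cesaroA (δ - 1) (n - k) * Hstar1 k u| ≤
          C * (1 / u.1 ^ 2) *
            (1 / ((n + 1 : ℝ) ^ δ * u.2 ^ δ) + 1 / ((n + 1 : ℝ) * u.2)) := by
  intro δ hδ0 hδ1
  refine ⟨18/δ, by positivity, ?_⟩
  intro n u hu hu1 hu2
  obtain ⟨h2nn, h23, h1nn, h11⟩ := hu
  have hπ : (0:ℝ) < Real.pi := Real.pi_pos
  have hπ3 : (3:ℝ) < Real.pi := Real.pi_gt_three
  have hδ1' : -1 < δ - 1 := by linarith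
  have hδ' : (-1:ℝ) < δ := by linarith
  -- bounds on u.2
  have hu21 : u.2 ≤ 1/3 := by linarith
  set A := cesaroA δ n with hA
  have hApos : 0 < A := cesaro_pos hδ' n
  have hAlb : ((n:ℝ)+1) ^ δ ≤ A := cesaro_lb hδ0.le hδ1.le n
  -- Step A : denominator bound
  set D := Real.sin (Real.pi * (u.1 + u.2) / 2) * Real.sin (Real.pi * (u.1 - u.2) / 2) with hDdef
  have hplus : Real.pi * u.1 / 8 ≤ Real.sin (Real.pi * (u.1 + u.2) / 2) := by
    have h0t : 0 ≤ Real.pi * (u.1 + u.2) / 2 := by positivity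
    have h1t : Real.pi * (u.1 + u.2) / 2 ≤ 2*Real.pi/3 := by nlinarith
    have := sin_lb h0t h1t
    nlinarith
  have hminus : Real.pi * u.1 / 12 ≤ Real.sin (Real.pi * (u.1 - u.2) / 2) := by
    have h0t : 0 ≤ Real.pi * (u.1 - u.2) / 2 := by nlinarith
    have h1t : Real.pi * (u.1 - u.2) / 2 ≤ 2*Real.pi/3 := by nlinarith
    have := sin_lb h0t h1t
    nlinarith
  have hD : u.1^2/11 ≤ D := by
    have hmm : (Real.pi * u.1 / 8) * (Real.pi * u.1 / 12) ≤ D := by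
      apply mul_le_mul hplus hminus (by positivity) ?_
      exact le_trans (by positivity) hplus
    have hπ2 : (9:ℝ) < Real.pi^2 := by nlinarith
    nlinarith [hmm, mul_pos hu1 hu1, hπ2, sq_nonneg u.1]
  have hD0 : (0:ℝ) < D := lt_of_lt_of_le (by positivity) hD
  -- Step B : factor the sum
  set S := ∑ k ∈ Finset.range (n + 1),
      cesaroA (δ - 1) (n - k) * Real.cos ((2 * (k:ℝ) + 1) * Real.pi * u.2) with hSdef
  have hsum : ∑ k ∈ Finset.range (n + 1), cesaroA (δ - 1) (n - k) * Hstar1 k u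
      = S * (1/(2*D)) := by
    rw [hSdef, Finset.sum_mul]
    apply Finset.sum_congr rfl
    intro k _
    unfold Hstar1
    rw [← hDdef]
    ring
  -- Step C : the key estimate
  have claim : |S| ≤ (3/δ) * (A / (((n:ℝ)+1) ^ δ * u.2 ^ δ)) := by
    rw [hSdef, hA]
    exact key_estimate hδ0 hδ1 n hu2 hu21
  -- final assembly
  have hx0 : (0:ℝ) < ((n:ℝ)+1) ^ δ * u.2 ^ δ := by
    apply mul_pos (Real.rpow_pos_of_pos (by positivity) _) (Real.rpow_pos_of_pos hu2 _)
  rw [hsum]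
  have e0 : |(1/A) * (S * (1/(2*D)))| = |S| * (1/A) * (1/(2*D)) := by
    rw [abs_mul, abs_mul, abs_of_pos (by positivity : (0:ℝ) < 1/A),
      abs_of_pos (by positivity : (0:ℝ) < 1/(2*D))]
    ring
  rw [e0]
  have b1 : |S| * (1/A) ≤ (3/δ) * (1/(((n:ℝ)+1) ^ δ * u.2 ^ δ)) := by
    have := mul_le_mul_of_nonneg_right claim (by positivity : (0:ℝ) ≤ 1/A)
    refine this.trans (le_of_eq ?_)
    field_simp
  have b2 : 1/(2*D) ≤ 11/(2*u.1^2) := by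
    have h1 : 1/(2*D) ≤ 1/((2*u.1^2)/11) := by
      apply one_div_le_one_div_of_le (by positivity)
      linarith
    rw [one_div_div] at h1
    refine h1.trans (le_of_eq ?_)
    ring
  have hT2 : (0:ℝ) ≤ 1 / (((n:ℝ) + 1) * u.2) := by positivity
  calc |S| * (1/A) * (1/(2*D))
      ≤ ((3/δ) * (1/(((n:ℝ)+1) ^ δ * u.2 ^ δ))) * (11/(2*u.1^2)) := by
        apply mul_le_mul b1 b2 (by positivity) (by positivity)
    _ = (33/(2*δ)) * ((1/u.1^2) * (1/(((n:ℝ)+1) ^ δ * u.2 ^ δ))) := by ring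
    _ ≤ (18/δ) * ((1/u.1^2) * (1/(((n:ℝ)+1) ^ δ * u.2 ^ δ))) := by
        apply mul_le_mul_of_nonneg_right _ (by positivity)
        rw [div_le_div_iff₀ (by positivity) (by positivity)]
        nlinarith
    _ ≤ (18/δ) * ((1/u.1^2) * (1/(((n:ℝ)+1) ^ δ * u.2 ^ δ) + 1/(((n:ℝ)+1) * u.2))) := by
        apply mul_le_mul_of_nonneg_left _ (by positivity)
        apply mul_le_mul_of_nonneg_left _ (by positivity)
        linarith
    _ = (18/δ) * (1/u.1^2) * (1/(((n:ℝ)+1) ^ δ * u.2 ^ δ) + 1/(((n:ℝ)+1) * u.2)) := by ring
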